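/- Let f(x) = a_0 x^n + ... + a_n be a real polynomial of degree n and let 2 ≤ M ≤ n. If all the leading coefficients h_0, h_1, ..., h_n of the polynomials f_0, ..., f_n produced by the generalized Euclidean algorithm with step M are positive, then all the coefficients a_0, a_1, ..., a_n of f are positive. -/
import Mathlib


open Polynomial

/-- The arithmetic part `f_j` of the polynomial with coefficients `a_0,...,a_n`:
`f_j(x) = Σ_{0 ≤ l ≤ n, l ≡ j (mod M)} a_l x^(n-l)`. -/
noncomputable def geaInit (a : ℕ → ℝ) (n M j : ℕ) : Polynomial ℝ :=
  ∑ l ∈ Finset.range (n + 1), if l % M = j then C (a l) * X ^ (n - l) else 0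

/-- The polynomials `f_0, f_1, ..., f_n` of the generalized Euclidean algorithm with step `M`:
`f_i = d_i f_{i+1} + f_{i+M}` where `d_i = f_i / f_{i+1}` and `f_{i+M} = f_i % f_{i+1}`
(Euclidean division of polynomials). -/
noncomputable def gea (a : ℕ → ℝ) (n M : ℕ) : ℕ → Polynomial ℝ
  | i =>
    if _h : i < M then geaInit a n M i
    else if _h2 : 2 ≤ M then
      gea a n M (i - M) % gea a n M (i - M + 1)
    else 0
  termination_by i => i
  decreasing_by all_goals omega


lemma gea_of_lt {a n M i} (h : i < M) : gea a n M i = geaInit a n M i := by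
  rw [gea]; simp [h]

lemma gea_add_M {a n M i} (hM : 2 ≤ M) :
    gea a n M (i + M) = gea a n M i % gea a n M (i + 1) := by
  rw [gea]
  have h1 : ¬ i + M < M := by omega
  rw [dif_neg h1, dif_pos hM, Nat.add_sub_cancel]

lemma geaInit_coeff {a : ℕ → ℝ} {n M j l : ℕ} (hl : l ≤ n) (hlj : l % M = j) :
    (geaInit a n M j).coeff (n - l) = a l := by
  unfold geaInit
  rw [finset_sum_coeff]
  rw [Finset.sum_eq_single l]
  · simp [hlj, coeff_X_pow]
  · intro b hb hbl
    simp only [Finset.mem_range] at hb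
    split
    · rw [coeff_C_mul, coeff_X_pow, if_neg (by omega), mul_zero]
    · simp
  · intro h; exact absurd (Finset.mem_range.2 (by omega)) h

lemma geaInit_support {a : ℕ → ℝ} {n M j k : ℕ} (h : (geaInit a n M j).coeff k ≠ 0) :
    ∃ l, l ≤ n ∧ l % M = j ∧ k = n - l := by
  unfold geaInit at h
  rw [finset_sum_coeff] at h
  obtain ⟨l, hl, hne⟩ := Finset.exists_ne_zero_of_sum_ne_zero h
  simp only [Finset.mem_range] at hl
  refine ⟨l, by omega, ?_, ?_⟩
  · by_contra hc; rw [if_neg hc] at hne; simp at hne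
  · rcases em (l % M = j) with h1 | h1
    · rw [if_pos h1, coeff_C_mul, coeff_X_pow] at hne
      rcases em (k = n - l) with h2 | h2
      · exact h2
      · rw [if_neg h2, mul_zero] at hne; exact absurd rfl hne
    · rw [if_neg h1] at hne; simp at hne

lemma sub_mul_mod (p q t : Polynomial ℝ) : (p - t * q) % q = p % q := by
  by_cases hq : q = 0
  · rw [hq, mul_zero, sub_zero]
  rw [Polynomial.mod_def, Polynomial.mod_def, sub_modByMonic]
  have hd : (q * C q.leadingCoeff⁻¹) ∣ t * q := by
    refine ⟨C q.leadingCoeff * t, ?_⟩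
    have hc : (C q.leadingCoeff⁻¹ * C q.leadingCoeff : Polynomial ℝ) = 1 := by
      rw [← C_mul, inv_mul_cancel₀ (leadingCoeff_ne_zero.2 hq), C_1]
    calc t * q = q * t * (C q.leadingCoeff⁻¹ * C q.leadingCoeff) := by rw [hc, mul_one, mul_comm]
      _ = q * C q.leadingCoeff⁻¹ * (C q.leadingCoeff * t) := by ring
  rw [(modByMonic_eq_zero_iff_dvd (monic_mul_leadingCoeff_inv hq)).2 hd, sub_zero]

lemma class_mod (M n i : ℕ) :
    ∀ N (p q : Polynomial ℝ), p.natDegree ≤ N →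
    (∀ k, p.coeff k ≠ 0 → (k + i) % M = n % M) →
    (∀ k, q.coeff k ≠ 0 → (k + i + 1) % M = n % M) →
    ∀ k, (p % q).coeff k ≠ 0 → (k + i) % M = n % M := by
  intro N
  induction N using Nat.strong_induction_on with
  | _ N IH =>
  intro p q hpN hp hq
  by_cases hq0 : q = 0
  · rw [hq0, EuclideanDomain.mod_zero]; exact hp
  by_cases hdeg : degree p < degree q
  · rw [(Polynomial.mod_eq_self_iff hq0).2 hdeg]; exact hp
  push_neg at hdeg
  have hp0 : p ≠ 0 := by
    rintro rfl
    rw [degree_zero] at hdeg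
    exact hq0 (degree_eq_bot.1 (le_bot_iff.1 hdeg))
  set c := p.leadingCoeff / q.leadingCoeff with hc
  set e := p.natDegree - q.natDegree with he
  set t := C c * X ^ e with ht
  have hdq : q.natDegree ≤ p.natDegree := natDegree_le_natDegree hdeg
  have hlcq : q.leadingCoeff ≠ 0 := leadingCoeff_ne_zero.2 hq0
  have hlcp : p.leadingCoeff ≠ 0 := leadingCoeff_ne_zero.2 hp0
  have hc0 : c ≠ 0 := div_ne_zero hlcp hlcq
  have hdt : (t * q).degree = p.degree := by
    rw [degree_mul, ht, Polynomial.degree_C_mul_X_pow e hc0, degree_eq_natDegree hq0,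
      degree_eq_natDegree hp0, ← Nat.cast_add, Nat.cast_inj]
    omega
  have hlct : (t * q).leadingCoeff = p.leadingCoeff := by
    rw [leadingCoeff_mul, ht, leadingCoeff_C_mul_X_pow, hc, div_mul_cancel₀ _ hlcq]
  have hsub := sub_mul_mod p q t
  have hA : (p.natDegree + i) % M = n % M := by
    apply hp; rw [coeff_natDegree]; exact hlcp
  have hB : (q.natDegree + i + 1) % M = n % M := by
    apply hq; rw [coeff_natDegree]; exact hlcq
  have he1 : e % M = 1 % M := by
    have h1 : (e + (q.natDegree + i)) % M = (1 + (q.natDegree + i)) % M := by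
      rw [show e + (q.natDegree + i) = p.natDegree + i by omega,
        show 1 + (q.natDegree + i) = q.natDegree + i + 1 by omega, hA, hB]
    exact Nat.ModEq.add_right_cancel' (q.natDegree + i) h1
  have hp' : ∀ k, (p - t * q).coeff k ≠ 0 → (k + i) % M = n % M := by
    intro k hk
    rw [coeff_sub] at hk
    by_cases hpk : p.coeff k = 0
    · rw [hpk, zero_sub, neg_ne_zero] at hk
      have heq : (t * q).coeff k = c * (q * X ^ e).coeff k := by
        rw [show t * q = C c * (q * X ^ e) by rw [ht]; ring, coeff_C_mul]
      rw [heq] at hk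
      have hk2 : (q * X ^ e).coeff k ≠ 0 := fun h0 => hk (by rw [h0, mul_zero])
      rw [coeff_mul_X_pow'] at hk2
      by_cases hek : e ≤ k
      · rw [if_pos hek] at hk2
        have hcls := hq (k - e) hk2
        rw [show k + i = e + (k - e + i) by omega]
        calc (e + (k - e + i)) % M = (1 + (k - e + i)) % M := Nat.ModEq.add_right _ he1
          _ = n % M := by rw [show 1 + (k - e + i) = k - e + i + 1 by omega, hcls]
      · rw [if_neg hek] at hk2; exact absurd rfl hk2
    · exact hp k hpk
  by_cases hz : p - t * q = 0
  · intro k hk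
    rw [← hsub, hz, EuclideanDomain.zero_mod] at hk
    simp at hk
  · have hdlt : (p - t * q).degree < p.degree := degree_sub_lt hdt.symm hp0 hlct.symm
    have hnd : (p - t * q).natDegree < p.natDegree := natDegree_lt_natDegree hz hdlt
    intro k hk
    rw [← hsub] at hk
    exact IH _ (lt_of_lt_of_le hnd hpN) _ q le_rfl hp' hq k hk

lemma gea_class {a : ℕ → ℝ} {n M : ℕ} (hM : 2 ≤ M) :
    ∀ i k, (gea a n M i).coeff k ≠ 0 → (k + i) % M = n % M := by
  intro i
  induction i using Nat.strong_induction_on with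
  | _ i IH =>
  by_cases hi : i < M
  · rw [gea_of_lt hi]
    intro k hk
    obtain ⟨l, hln, hlm, rfl⟩ := geaInit_support hk
    obtain ⟨s, hs⟩ := Nat.exists_eq_add_of_le hln
    have hlt : ∃ t, l = M * t + i := ⟨l / M, by rw [← hlm]; exact (Nat.div_add_mod l M).symm⟩
    obtain ⟨t, rfl⟩ := hlt
    rw [show n - (M * t + i) + i = i + s by omega, hs,
      show M * t + i + s = i + s + M * t by omega, Nat.add_mul_mod_self_left]
  · push_neg at hi
    obtain ⟨j, rfl⟩ := Nat.exists_eq_add_of_le hi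
    rw [show M + j = j + M by omega, gea_add_M hM]
    intro k hk
    have hres := class_mod M n j (gea a n M j).natDegree (gea a n M j) (gea a n M (j + 1))
      le_rfl (fun k hk => IH j (by omega) k hk)
      (fun k hk => by have := IH (j + 1) (by omega) k hk; rwa [← add_assoc] at this) k hk
    rw [show k + (j + M) = k + j + M by omega, Nat.add_mod_right]
    exact hres

section Main
variable {a : ℕ → ℝ} {n M : ℕ}

lemma gea_ne_zero (hpos : ∀ i ≤ n, 0 < (gea a n M i).leadingCoeff) :
    ∀ i ≤ n, gea a n M i ≠ 0 :=
  fun i hi => leadingCoeff_ne_zero.1 (ne_of_gt (hpos i hi))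

lemma gea_cong (hM : 2 ≤ M) (hpos : ∀ i ≤ n, 0 < (gea a n M i).leadingCoeff) :
    ∀ i ≤ n, ((gea a n M i).natDegree + i) % M = n % M := by
  intro i hi
  apply gea_class hM
  rw [coeff_natDegree]
  exact leadingCoeff_ne_zero.2 (gea_ne_zero hpos i hi)

lemma gea_dlt (hM : 2 ≤ M) (hpos : ∀ i ≤ n, 0 < (gea a n M i).leadingCoeff) :
    ∀ i, M ≤ i → i ≤ n →
      (gea a n M i).natDegree < (gea a n M (i - M + 1)).natDegree := by
  intro i hMi hi
  have hrw : gea a n M i = gea a n M (i - M) % gea a n M (i - M + 1) := by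
    rw [show i = (i - M) + M by omega, gea_add_M hM]
    congr 2 <;> omega
  have hq0 : gea a n M (i - M + 1) ≠ 0 := gea_ne_zero hpos _ (by omega)
  have hd : (gea a n M i).degree < (gea a n M (i - M + 1)).degree := by
    rw [hrw]; exact EuclideanDomain.mod_lt _ hq0
  exact natDegree_lt_natDegree (gea_ne_zero hpos i hi) hd

lemma gea_nd_le (hM : 2 ≤ M) (hpos : ∀ i ≤ n, 0 < (gea a n M i).leadingCoeff) :
    ∀ i ≤ n, (gea a n M i).natDegree + i ≤ n := by
  intro i
  induction i using Nat.strong_induction_on with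
  | _ i IH =>
  intro hi
  by_cases hiM : i < M
  · have hne := gea_ne_zero hpos i hi
    have hk : (gea a n M i).coeff (gea a n M i).natDegree ≠ 0 := by
      rw [coeff_natDegree]; exact leadingCoeff_ne_zero.2 hne
    rw [gea_of_lt hiM] at hk
    obtain ⟨l, hln, hlm, hnd⟩ := geaInit_support hk
    have : i ≤ l := by rw [← hlm]; exact Nat.mod_le l M
    rw [gea_of_lt hiM]
    omega
  · push_neg at hiM
    have h1 := gea_dlt hM hpos i hiM hi
    have h2 := IH (i - M + 1) (by omega) (by omega)
    have hcong := gea_cong hM hpos i hi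
    by_contra hgt
    push_neg at hgt
    have hdvd : M ∣ (gea a n M i).natDegree + i - n :=
      (Nat.modEq_iff_dvd' (by omega)).1 hcong.symm
    have := Nat.le_of_dvd (by omega) hdvd
    omega

lemma gea_nd0 (hM : 2 ≤ M) (hMn : M ≤ n) (ha0 : a 0 ≠ 0)
    (hpos : ∀ i ≤ n, 0 < (gea a n M i).leadingCoeff) :
    (gea a n M 0).natDegree = n := by
  have h1 : (gea a n M 0).coeff n ≠ 0 := by
    have hco := geaInit_coeff (a := a) (n := n) (M := M) (l := 0) (j := 0) (by omega) (by simp)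
    rw [Nat.sub_zero] at hco
    rw [gea_of_lt (by omega), hco]
    exact ha0
  have h2 := le_natDegree_of_ne_zero h1
  have h3 := gea_nd_le hM hpos 0 (by omega)
  omega

lemma gea_nd (hM : 2 ≤ M) (hMn : M ≤ n) (ha0 : a 0 ≠ 0)
    (hpos : ∀ i ≤ n, 0 < (gea a n M i).leadingCoeff) :
    ∀ i ≤ n, (gea a n M i).natDegree + i = n := by
  have aux : ∀ T i, 1 ≤ i → i ≤ n → (gea a n M i).natDegree + i + M ≤ n → n - i ≤ T →
      False := by
    intro T
    induction T with
    | zero => intro i hi1 hi hbad hT; omega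
    | succ T IHT =>
      intro i hi1 hi hbad hT
      have hi'n : i + (M - 1) ≤ n := by omega
      have h1 : (gea a n M (i + (M - 1))).natDegree <
          (gea a n M (i + (M - 1) - M + 1)).natDegree :=
        gea_dlt hM hpos (i + (M - 1)) (by omega) hi'n
      rw [show i + (M - 1) - M + 1 = i by omega] at h1
      have hcong := gea_cong hM hpos (i + (M - 1)) hi'n
      have hdvd : M ∣ n - ((gea a n M (i + (M - 1))).natDegree + (i + (M - 1))) :=
        (Nat.modEq_iff_dvd' (by omega)).1 hcong
      have hMle : M ≤ n - ((gea a n M (i + (M - 1))).natDegree + (i + (M - 1))) :=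
        Nat.le_of_dvd (by omega) hdvd
      exact IHT (i + (M - 1)) (by omega) hi'n (by omega) (by omega)
  intro i hi
  have hb := gea_nd_le hM hpos i hi
  by_contra hne
  have hlt : (gea a n M i).natDegree + i < n := by omega
  rcases Nat.eq_zero_or_pos i with rfl | hi1
  · have := gea_nd0 hM hMn ha0 hpos; omega
  have hcong := gea_cong hM hpos i hi
  have hdvd : M ∣ n - ((gea a n M i).natDegree + i) :=
    (Nat.modEq_iff_dvd' (by omega)).1 hcong
  have hMle : M ≤ n - ((gea a n M i).natDegree + i) := Nat.le_of_dvd (by omega) hdvd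
  exact aux (n - i) i hi1 hi (by omega) le_rfl


lemma gea_step (hM : 2 ≤ M) (hMn : M ≤ n) (ha0 : a 0 ≠ 0)
    (hpos : ∀ i ≤ n, 0 < (gea a n M i).leadingCoeff) {i : ℕ} (hin : i + M ≤ n) :
    gea a n M (i + M) = gea a n M i -
      C ((gea a n M i).leadingCoeff / (gea a n M (i + 1)).leadingCoeff) * X *
        gea a n M (i + 1) := by
  set p := gea a n M i with hp
  set q := gea a n M (i + 1) with hq
  have hqn : i + 1 ≤ n := by omega
  have hq0 : q ≠ 0 := gea_ne_zero hpos (i + 1) hqn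
  have hp0 : p ≠ 0 := gea_ne_zero hpos i (by omega)
  have hlcq : q.leadingCoeff ≠ 0 := leadingCoeff_ne_zero.2 hq0
  have hlcp : p.leadingCoeff ≠ 0 := leadingCoeff_ne_zero.2 hp0
  set c := p.leadingCoeff / q.leadingCoeff with hc
  have hndp : p.natDegree = n - i := by
    have h := gea_nd hM hMn ha0 hpos i (by omega); rw [← hp] at h; omega
  have hndq : q.natDegree = n - i - 1 := by
    have h := gea_nd hM hMn ha0 hpos (i + 1) hqn; rw [← hq] at h; omega
  have hcC : (C q.leadingCoeff⁻¹ * C q.leadingCoeff : Polynomial ℝ) = 1 := by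
    rw [← C_mul, inv_mul_cancel₀ hlcq, C_1]
  -- the remainder candidate
  set r := p - C c * X * q with hr
  have hcoeffr : ∀ m : ℕ, n - i - 1 ≤ m → r.coeff m = 0 := by
    intro m hm
    have hrw : r.coeff m = p.coeff m - c * (X * q).coeff m := by
      rw [hr, coeff_sub, show C c * X * q = C c * (X * q) by ring, coeff_C_mul]
    have hm1 : 1 ≤ m := by omega
    have hXq : (X * q).coeff m = q.coeff (m - 1) := by
      rw [show m = (m - 1) + 1 by omega, coeff_X_mul]
      congr 1
    rcases show m = n - i - 1 ∨ m = n - i ∨ n - i < m by omega with h | h | h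
    · have hpm : p.coeff m = 0 := by
        by_contra hne
        have := gea_class hM i m hne
        have hdvd : M ∣ n - (m + i) := (Nat.modEq_iff_dvd' (by omega)).1 this
        have := Nat.le_of_dvd (by omega) hdvd
        omega
      have hqm : q.coeff (m - 1) = 0 := by
        by_contra hne
        have := gea_class hM (i + 1) (m - 1) hne
        have hdvd : M ∣ n - (m - 1 + (i + 1)) := (Nat.modEq_iff_dvd' (by omega)).1 this
        have := Nat.le_of_dvd (by omega) hdvd
        omega
      rw [hrw, hXq, hpm, hqm, mul_zero, sub_zero]
    · have hpm : p.coeff m = p.leadingCoeff := by rw [← coeff_natDegree, hndp, h]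
      have hqm : q.coeff (m - 1) = q.leadingCoeff := by
        rw [← coeff_natDegree, hndq, h]
      rw [hrw, hXq, hpm, hqm, hc, div_mul_cancel₀ _ hlcq, sub_self]
    · have hpm : p.coeff m = 0 := coeff_eq_zero_of_natDegree_lt (by omega)
      have hqm : q.coeff (m - 1) = 0 := coeff_eq_zero_of_natDegree_lt (by omega)
      rw [hrw, hXq, hpm, hqm, mul_zero, sub_zero]
  have hdegr : r.degree < (q * C q.leadingCoeff⁻¹).degree := by
    rw [degree_mul_leadingCoeff_inv q hq0, degree_eq_natDegree hq0, hndq]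
    exact (degree_lt_iff_coeff_zero r (n - i - 1)).2 hcoeffr
  have hmon : Monic (q * C q.leadingCoeff⁻¹) := monic_mul_leadingCoeff_inv hq0
  have hgq : (q * C q.leadingCoeff⁻¹) * (C q.leadingCoeff * (C c * X)) = C c * X * q := by
    calc (q * C q.leadingCoeff⁻¹) * (C q.leadingCoeff * (C c * X))
        = (C q.leadingCoeff⁻¹ * C q.leadingCoeff) * (C c * X * q) := by ring
      _ = C c * X * q := by rw [hcC, one_mul]
  have heq : r + (q * C q.leadingCoeff⁻¹) * (C q.leadingCoeff * (C c * X)) = p := by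
    rw [hgq, hr]; ring
  have huniq := div_modByMonic_unique (f := p) (g := q * C q.leadingCoeff⁻¹)
    (C q.leadingCoeff * (C c * X)) r hmon ⟨heq, hdegr⟩
  rw [gea_add_M hM, ← hp, ← hq, Polynomial.mod_def, huniq.2, hr]

lemma gea_pos (hM : 2 ≤ M) (hMn : M ≤ n) (ha0 : a 0 ≠ 0)
    (hpos : ∀ i ≤ n, 0 < (gea a n M i).leadingCoeff) :
    ∀ D R i l, l - i ≤ D → n - l ≤ R → i ≤ n → l ≤ n → i ≤ l → l % M = i % M →
      0 < (gea a n M i).coeff (n - l) := by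
  intro D
  induction D using Nat.strong_induction_on with
  | _ D IHD =>
  intro R
  induction R using Nat.strong_induction_on with
  | _ R IHR =>
  intro i l hD hR hin hln hil hcong
  rcases Nat.eq_or_lt_of_le hil with heq | hlt
  · subst heq
    have hnd := gea_nd hM hMn ha0 hpos i hin
    rw [show n - i = (gea a n M i).natDegree by omega, coeff_natDegree]
    exact hpos i hin
  · have hdvd : M ∣ l - i := (Nat.modEq_iff_dvd' hil).1 hcong.symm
    have hMl : M ≤ l - i := Nat.le_of_dvd (by omega) hdvd
    have hstep := gea_step hM hMn ha0 hpos (i := i) (by omega)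
    have hre : (gea a n M i).coeff (n - l) =
        (gea a n M (i + M)).coeff (n - l) +
        ((gea a n M i).leadingCoeff / (gea a n M (i + 1)).leadingCoeff) *
          (X * gea a n M (i + 1)).coeff (n - l) := by
      have h2 : gea a n M i = gea a n M (i + M) +
          C ((gea a n M i).leadingCoeff / (gea a n M (i + 1)).leadingCoeff) *
            (X * gea a n M (i + 1)) := by
        rw [hstep]; ring
      conv_lhs => rw [h2]
      rw [coeff_add, coeff_C_mul]
    have hc : 0 < (gea a n M i).leadingCoeff / (gea a n M (i + 1)).leadingCoeff :=
      div_pos (hpos i hin) (hpos (i + 1) (by omega))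
    have hterm1 : 0 < (gea a n M (i + M)).coeff (n - l) := by
      apply IHD (l - (i + M)) (by omega) (n - l) (i + M) l le_rfl le_rfl (by omega) hln
        (by omega)
      rw [Nat.add_mod_right]
      exact hcong
    rcases Nat.eq_or_lt_of_le hln with heqn | hltn
    · have h0 : n - l = 0 := by omega
      have hX0 : (X * gea a n M (i + 1)).coeff (n - l) = 0 := by
        rw [h0, mul_coeff_zero, coeff_X_zero, zero_mul]
      rw [hre, hX0, mul_zero, add_zero]
      exact hterm1
    · have hXc : (X * gea a n M (i + 1)).coeff (n - l) =
          (gea a n M (i + 1)).coeff (n - (l + 1)) := by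
        rw [show n - l = (n - (l + 1)) + 1 by omega, coeff_X_mul]
      have hterm2 : 0 < (gea a n M (i + 1)).coeff (n - (l + 1)) := by
        apply IHR (n - (l + 1)) (by omega) (i + 1) (l + 1) (by omega) le_rfl (by omega)
          (by omega) (by omega)
        exact Nat.ModEq.add_right 1 hcong
      rw [hre, hXc]
      exact add_pos hterm1 (mul_pos hc hterm2)

/-- If all the leading coefficients `h_0, ..., h_n` of the polynomials `f_0, ..., f_n`
produced by the generalized Euclidean algorithm with step `M` are positive, then all the
coefficients `a_0, ..., a_n` of `f` are positive. -/
theorem pos_leading_coeffs_imp_pos_coeffs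
    (n M : ℕ) (a : ℕ → ℝ) (ha0 : a 0 ≠ 0) (hM : 2 ≤ M) (hMn : M ≤ n)
    (hpos : ∀ i ≤ n, 0 < (gea a n M i).leadingCoeff) :
    ∀ p ≤ n, 0 < a p := by
  intro p hp
  have hi : p % M < M := Nat.mod_lt _ (by omega)
  have hcoeff : (gea a n M (p % M)).coeff (n - p) = a p := by
    rw [gea_of_lt hi]; exact geaInit_coeff hp rfl
  rw [← hcoeff]
  exact gea_pos hM hMn ha0 hpos (p - p % M) (n - p) (p % M) p le_rfl le_rfl
    (by omega) hp (Nat.mod_le p M) (Nat.mod_mod_of_dvd p dvd_rfl).symm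
end Main
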